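/- Let x, y, u, v ∈ ℝ^d have strictly positive coordinates and set a± = max/min of y_i/x_i and b± = max/min of v_i/u_i. Then there exist y*, v* with strictly positive coordinates such that F(x,y*;u,v*) ≥ F(x,y;u,v), the extremal ratios are preserved (max/min of y*_i/x_i equal a±, max/min of v*_i/u_i equal b±), and for every i, y*_i/x_i ∈ {a−, a+} and v*_i/u_i ∈ {b−, b+}, where F(x,y;u,v) := ((x·u)(y·v))/((x·v)(y·u)). -/

import Mathlib

open Matrix

private lemma key_step (A B c e t s : ℝ) (h1 : 0 < B + t * e) (h2 : 0 < B + s * e)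
    (h3 : (s - t) * (A * e - c * B) ≤ 0) :
    (A + t * c) / (B + t * e) ≤ (A + s * c) / (B + s * e) := by
  rw [div_le_div_iff₀ h1 h2]; nlinarith

private lemma dot_pos {d : ℕ} [NeZero d] {f g : Fin d → ℝ} (hf : ∀ i, 0 < f i)
    (hg : ∀ i, 0 < g i) : 0 < f ⬝ᵥ g := by
  have : Nonempty (Fin d) := Fin.pos_iff_nonempty.mp (Nat.pos_of_ne_zero (NeZero.ne d))
  exact Finset.sum_pos (fun i _ => mul_pos (hf i) (hg i)) Finset.univ_nonempty

private lemma ratio_pos {a b : ℝ} {lo : ℝ} (hlo : 0 < lo) (hb : 0 < b) (h : lo ≤ a / b) :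
    0 < a := by
  have h1 : 0 < a / b := lt_of_lt_of_le hlo h
  have h2 : a / b * b = a := div_mul_cancel₀ a hb.ne'
  nlinarith

private lemma opt {d : ℕ} [NeZero d] (x p q : Fin d → ℝ) (hx : ∀ i, 0 < x i)
    (hp : ∀ i, 0 < p i) (hq : ∀ i, 0 < q i) (lo hi : ℝ) (hlo : 0 < lo)
    (T : Finset (Fin d)) :
    ∀ y : Fin d → ℝ, (∀ j, lo ≤ y j / x j) → (∀ j, y j / x j ≤ hi) →
    ∃ y' : Fin d → ℝ, (∀ j, j ∉ T → y' j = y j) ∧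
      (∀ j ∈ T, y' j / x j = lo ∨ y' j / x j = hi) ∧
      (∀ j, lo ≤ y' j / x j) ∧ (∀ j, y' j / x j ≤ hi) ∧
      (y ⬝ᵥ p) / (y ⬝ᵥ q) ≤ (y' ⬝ᵥ p) / (y' ⬝ᵥ q) := by
  induction T using Finset.induction_on with
  | empty => intro y h1 h2; exact ⟨y, fun j _ => rfl, fun j hj => absurd hj (by simp),
      h1, h2, le_refl _⟩
  | @insert j T hj IH =>
    intro y h1 h2
    obtain ⟨z, hz1, hz2, hz3, hz4, hz5⟩ := IH y h1 h2
    have hzpos : ∀ k, 0 < z k := fun k => ratio_pos hlo (hx k) (hz3 k)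
    set A : ℝ := ∑ k ∈ Finset.univ.erase j, z k * p k with hA
    set B : ℝ := ∑ k ∈ Finset.univ.erase j, z k * q k with hB
    set c : ℝ := x j * p j with hc
    set e : ℝ := x j * q j with he
    set t : ℝ := z j / x j with ht
    have hxj : (x j : ℝ) ≠ 0 := (hx j).ne'
    have hzj : z j = t * x j := by rw [ht, div_mul_cancel₀ _ hxj]
    have hzp : z ⬝ᵥ p = A + t * c := by
      rw [dotProduct, ← Finset.sum_erase_add _ _ (Finset.mem_univ j), hA, hc, hzj]; ring
    have hzq : z ⬝ᵥ q = B + t * e := by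
      rw [dotProduct, ← Finset.sum_erase_add _ _ (Finset.mem_univ j), hB, he, hzj]; ring
    have hloh : lo ≤ hi := le_trans (hz3 j) (hz4 j)
    have hchoice : ∃ s : ℝ, (s = lo ∨ s = hi) ∧ (s - t) * (A * e - c * B) ≤ 0 := by
      by_cases h : A * e - c * B ≤ 0
      · exact ⟨hi, Or.inr rfl, mul_nonpos_of_nonneg_of_nonpos (by linarith [hz4 j]) h⟩
      · exact ⟨lo, Or.inl rfl, mul_nonpos_of_nonpos_of_nonneg (by linarith [hz3 j])
          (le_of_lt (not_le.mp h))⟩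
    obtain ⟨s, hs, hsign⟩ := hchoice
    have hspos : 0 < s := by rcases hs with h | h <;> rw [h] <;> linarith
    set y' : Fin d → ℝ := Function.update z j (s * x j) with hy'
    have hy'j : y' j = s * x j := Function.update_self j _ z
    have hy'k : ∀ k, k ≠ j → y' k = z k := fun k hk => Function.update_of_ne hk _ z
    have hy'p : y' ⬝ᵥ p = A + s * c := by
      rw [dotProduct, ← Finset.sum_erase_add _ _ (Finset.mem_univ j), hy'j]
      have hAe : ∑ k ∈ Finset.univ.erase j, y' k * p k = A := by
        rw [hA]; apply Finset.sum_congr rfl; intro k hk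
        rw [hy'k k (Finset.ne_of_mem_erase hk)]
      rw [hAe, hc]; ring
    have hy'q : y' ⬝ᵥ q = B + s * e := by
      rw [dotProduct, ← Finset.sum_erase_add _ _ (Finset.mem_univ j), hy'j]
      have hBe : ∑ k ∈ Finset.univ.erase j, y' k * q k = B := by
        rw [hB]; apply Finset.sum_congr rfl; intro k hk
        rw [hy'k k (Finset.ne_of_mem_erase hk)]
      rw [hBe, he]; ring
    have hBte : 0 < B + t * e := hzq ▸ dot_pos hzpos hq
    have hBnn : 0 ≤ B := by
      rw [hB]; exact Finset.sum_nonneg fun k _ => le_of_lt (mul_pos (hzpos k) (hq k))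
    have hepos : 0 < e := by rw [he]; exact mul_pos (hx j) (hq j)
    have hBse : 0 < B + s * e := by positivity
    have hratioj : y' j / x j = s := by rw [hy'j]; field_simp
    refine ⟨y', ?_, ?_, ?_, ?_, ?_⟩
    · intro k hk
      have hkj : k ≠ j := fun h => hk (h ▸ Finset.mem_insert_self j T)
      rw [hy'k k hkj]; exact hz1 k (fun h => hk (Finset.mem_insert_of_mem h))
    · intro k hk
      rcases Finset.mem_insert.mp hk with h | h
      · subst h; rw [hratioj]
        rcases hs with h | h
        · exact Or.inl h
        · exact Or.inr h
      · have hkj : k ≠ j := fun hh => hj (hh ▸ h)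
        rw [hy'k k hkj]; exact hz2 k h
    · intro k
      by_cases hk : k = j
      · subst hk; rw [hratioj]
        rcases hs with h | h <;> rw [h] <;> linarith
      · rw [hy'k k hk]; exact hz3 k
    · intro k
      by_cases hk : k = j
      · subst hk; rw [hratioj]
        rcases hs with h | h <;> rw [h] <;> linarith
      · rw [hy'k k hk]; exact hz4 k
    · calc (y ⬝ᵥ p) / (y ⬝ᵥ q) ≤ (z ⬝ᵥ p) / (z ⬝ᵥ q) := hz5
        _ ≤ (y' ⬝ᵥ p) / (y' ⬝ᵥ q) := by
            rw [hzp, hzq, hy'p, hy'q]; exact key_step A B c e t s hBte hBse hsign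

theorem stmt12 (d : ℕ) (hd : 2 ≤ d) (x y u v : Fin d → ℝ)
    (hx : ∀ i, 0 < x i) (hy : ∀ i, 0 < y i)
    (hu : ∀ i, 0 < u i) (hv : ∀ i, 0 < v i)
    (F : (Fin d → ℝ) → (Fin d → ℝ) → (Fin d → ℝ) → (Fin d → ℝ) → ℝ)
    (hF : ∀ x y u v, F x y u v = (x ⬝ᵥ u) * (y ⬝ᵥ v) / ((x ⬝ᵥ v) * (y ⬝ᵥ u)))
    (aplus aminus bplus bminus : ℝ)
    (haP : aplus = ⨆ i, y i / x i) (haM : aminus = ⨅ i, y i / x i)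
    (hbP : bplus = ⨆ i, v i / u i) (hbM : bminus = ⨅ i, v i / u i) :
    ∃ ystar vstar : Fin d → ℝ,
      (∀ i, 0 < ystar i) ∧ (∀ i, 0 < vstar i) ∧
      F x ystar u vstar ≥ F x y u v ∧
      (⨆ i, ystar i / x i) = aplus ∧ (⨅ i, ystar i / x i) = aminus ∧
      (⨆ i, vstar i / u i) = bplus ∧ (⨅ i, vstar i / u i) = bminus ∧
      (∀ i, ystar i / x i = aminus ∨ ystar i / x i = aplus) ∧
      (∀ i, vstar i / u i = bminus ∨ vstar i / u i = bplus) := by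
  have hd0 : 0 < d := by omega
  haveI : NeZero d := ⟨hd0.ne'⟩
  haveI hne : Nonempty (Fin d) := Fin.pos_iff_nonempty.mp hd0
  -- attainers for y/x
  obtain ⟨i0, hi0⟩ := Finite.exists_max (fun i => y i / x i)
  obtain ⟨i1, hi1⟩ := Finite.exists_min (fun i => y i / x i)
  obtain ⟨j0, hj0⟩ := Finite.exists_max (fun i => v i / u i)
  obtain ⟨j1, hj1⟩ := Finite.exists_min (fun i => v i / u i)
  have bddA : BddAbove (Set.range fun i => y i / x i) :=
    Set.Finite.bddAbove (Set.finite_range _)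
  have bddA' : BddBelow (Set.range fun i => y i / x i) :=
    Set.Finite.bddBelow (Set.finite_range _)
  have bddB : BddAbove (Set.range fun i => v i / u i) :=
    Set.Finite.bddAbove (Set.finite_range _)
  have bddB' : BddBelow (Set.range fun i => v i / u i) :=
    Set.Finite.bddBelow (Set.finite_range _)
  have haPv : aplus = y i0 / x i0 := by
    rw [haP]; exact le_antisymm (ciSup_le hi0) (le_ciSup bddA i0)
  have haMv : aminus = y i1 / x i1 := by
    rw [haM]; exact le_antisymm (ciInf_le bddA' i1) (le_ciInf hi1)
  have hbPv : bplus = v j0 / u j0 := by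
    rw [hbP]; exact le_antisymm (ciSup_le hj0) (le_ciSup bddB j0)
  have hbMv : bminus = v j1 / u j1 := by
    rw [hbM]; exact le_antisymm (ciInf_le bddB' j1) (le_ciInf hj1)
  have haMpos : 0 < aminus := haMv ▸ div_pos (hy i1) (hx i1)
  have hbMpos : 0 < bminus := hbMv ▸ div_pos (hv j1) (hu j1)
  have hybd1 : ∀ j, aminus ≤ y j / x j := fun j => haMv ▸ hi1 j
  have hybd2 : ∀ j, y j / x j ≤ aplus := fun j => haPv ▸ hi0 j
  have hvbd1 : ∀ j, bminus ≤ v j / u j := fun j => hbMv ▸ hj1 j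
  have hvbd2 : ∀ j, v j / u j ≤ bplus := fun j => hbPv ▸ hj0 j
  -- optimize y
  obtain ⟨y', hy1, hy2, hy3, hy4, hy5⟩ := opt x v u hx hv hu aminus aplus haMpos
    (Finset.univ \ {i0, i1}) y hybd1 hybd2
  have hy'pos : ∀ k, 0 < y' k := fun k => ratio_pos haMpos (hx k) (hy3 k)
  -- optimize v
  obtain ⟨v', hv1, hv2, hv3, hv4, hv5⟩ := opt u y' x hu hy'pos hx bminus bplus hbMpos
    (Finset.univ \ {j0, j1}) v hvbd1 hvbd2
  have hv'pos : ∀ k, 0 < v' k := fun k => ratio_pos hbMpos (hu k) (hv3 k)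
  -- unchanged coordinates
  have hyi0 : y' i0 = y i0 := hy1 i0 (by simp)
  have hyi1 : y' i1 = y i1 := hy1 i1 (by simp)
  have hvj0 : v' j0 = v j0 := hv1 j0 (by simp)
  have hvj1 : v' j1 = v j1 := hv1 j1 (by simp)
  -- positivity of dot products
  have dxu : 0 < x ⬝ᵥ u := dot_pos hx hu
  have dxv : 0 < x ⬝ᵥ v := dot_pos hx hv
  have dyu : 0 < y ⬝ᵥ u := dot_pos hy hu
  have dy'u : 0 < y' ⬝ᵥ u := dot_pos hy'pos hu
  have dxv' : 0 < x ⬝ᵥ v' := dot_pos hx hv'pos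
  -- F monotonicity chain
  have step1 : F x y u v ≤ F x y' u v := by
    rw [hF, hF]
    rw [show (x ⬝ᵥ u) * (y ⬝ᵥ v) / ((x ⬝ᵥ v) * (y ⬝ᵥ u))
        = ((x ⬝ᵥ u) / (x ⬝ᵥ v)) * ((y ⬝ᵥ v) / (y ⬝ᵥ u)) from (div_mul_div_comm _ _ _ _).symm]
    rw [show (x ⬝ᵥ u) * (y' ⬝ᵥ v) / ((x ⬝ᵥ v) * (y' ⬝ᵥ u))
        = ((x ⬝ᵥ u) / (x ⬝ᵥ v)) * ((y' ⬝ᵥ v) / (y' ⬝ᵥ u)) from (div_mul_div_comm _ _ _ _).symm]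
    exact mul_le_mul_of_nonneg_left hy5 (le_of_lt (div_pos dxu dxv))
  have step2 : F x y' u v ≤ F x y' u v' := by
    rw [hF, hF]
    have e1 : (x ⬝ᵥ u) * (y' ⬝ᵥ v) / ((x ⬝ᵥ v) * (y' ⬝ᵥ u))
        = ((x ⬝ᵥ u) / (y' ⬝ᵥ u)) * ((v ⬝ᵥ y') / (v ⬝ᵥ x)) := by
      rw [dotProduct_comm v y', dotProduct_comm v x, div_mul_div_comm]; ring_nf
    have e2 : (x ⬝ᵥ u) * (y' ⬝ᵥ v') / ((x ⬝ᵥ v') * (y' ⬝ᵥ u))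
        = ((x ⬝ᵥ u) / (y' ⬝ᵥ u)) * ((v' ⬝ᵥ y') / (v' ⬝ᵥ x)) := by
      rw [dotProduct_comm v' y', dotProduct_comm v' x, div_mul_div_comm]; ring_nf
    rw [e1, e2]
    exact mul_le_mul_of_nonneg_left hv5 (le_of_lt (div_pos dxu dy'u))
  -- ratio values
  have ryi0 : y' i0 / x i0 = aplus := by rw [hyi0, haPv]
  have ryi1 : y' i1 / x i1 = aminus := by rw [hyi1, haMv]
  have rvj0 : v' j0 / u j0 = bplus := by rw [hvj0, hbPv]
  have rvj1 : v' j1 / u j1 = bminus := by rw [hvj1, hbMv]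
  refine ⟨y', v', hy'pos, hv'pos, le_trans step1 step2, ?_, ?_, ?_, ?_, ?_, ?_⟩
  · refine le_antisymm (ciSup_le hy4) ?_
    have h := le_ciSup (f := fun i => y' i / x i) (Set.Finite.bddAbove (Set.finite_range _)) i0
    rwa [ryi0] at h
  · exact le_antisymm (ciInf_le (Set.Finite.bddBelow (Set.finite_range _)) i1 |>.trans_eq ryi1)
      (le_ciInf hy3)
  · refine le_antisymm (ciSup_le hv4) ?_
    have h := le_ciSup (f := fun i => v' i / u i) (Set.Finite.bddAbove (Set.finite_range _)) j0
    rwa [rvj0] at h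
  · exact le_antisymm (ciInf_le (Set.Finite.bddBelow (Set.finite_range _)) j1 |>.trans_eq rvj1)
      (le_ciInf hv3)
  · intro k
    by_cases hk : k ∈ Finset.univ \ ({i0, i1} : Finset (Fin d))
    · exact hy2 k hk
    · simp only [Finset.mem_sdiff, Finset.mem_univ, true_and, Finset.mem_insert,
        Finset.mem_singleton, not_not] at hk
      rcases hk with h | h
      · subst h; exact Or.inr ryi0
      · subst h; exact Or.inl ryi1
  · intro k
    by_cases hk : k ∈ Finset.univ \ ({j0, j1} : Finset (Fin d))
    · exact hv2 k hk
    · simp only [Finset.mem_sdiff, Finset.mem_univ, true_and, Finset.mem_insert,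
        Finset.mem_singleton, not_not] at hk
      rcases hk with h | h
      · subst h; exact Or.inr rvj0
      · subst h; exact Or.inl rvj1
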